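/- Let σ be any type (an alphabet of commuting variables) and k a field of characteristic zero. In the multivariate formal power series ring k[[X_z : z ∈ σ]], for z ∈ σ and α ∈ k let E(z,α) = Σ_{n≥0} αⁿ X_z^n/n! = e^{α X_z}. Then the family (E(z,α)) indexed by pairs (z,α) ∈ σ × (k ∖ {0}) is linearly independent over the polynomial subring k[X_z : z ∈ σ]: any finite relation Σ P_{z,α} · E(z,α) = 0 with polynomial coefficients P_{z,α} ∈ k[X_z : z ∈ σ] forces all P_{z,α} = 0. -/

import Mathlib

open scoped Classical

open Polynomial Finset

/- ### Auxiliary results -/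

/-- A polynomial vanishing at all large naturals is zero. -/
lemma ELIaux.poly_eval_nat_zero {k : Type*} [Field k] [CharZero k]
    (p : Polynomial k) (N : ℕ) (h : ∀ n, N ≤ n → p.eval (n : k) = 0) :
    p = 0 := by
  apply p.eq_zero_of_infinite_isRoot
  refine Set.infinite_of_injective_forall_mem (f := fun n : ℕ => ((n + N : ℕ) : k))
    ?_ (fun n => h (n + N) (by omega))
  intro a b hab
  have : ((a + N : ℕ) : k) = ((b + N : ℕ) : k) := hab
  have := Nat.cast_injective (R := k) this
  omega

/-- Linear independence of exponential-polynomial sequences. -/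
lemma ELIaux.seq_lemma {k : Type*} [Field k] [CharZero k] :
    ∀ (M : ℕ) (T : Finset k), (∀ α ∈ T, α ≠ 0) →
    ∀ (f : k → Polynomial k), (∑ α ∈ T, (2 * (f α).natDegree + 1)) ≤ M →
    ∀ (N : ℕ), (∀ n, N ≤ n → ∑ α ∈ T, (f α).eval (n : k) * α ^ n = 0) →
    ∀ α ∈ T, f α = 0 := by
  intro M
  induction M with
  | zero =>
    intro T hT f hM N hrel α hα
    exfalso
    have h1 : 2 * (f α).natDegree + 1 ≤ ∑ α ∈ T, (2 * (f α).natDegree + 1) := by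
      exact Finset.single_le_sum (f := fun α => 2 * (f α).natDegree + 1)
        (fun i _ => Nat.zero_le _) hα
    omega
  | succ M ih =>
    intro T hT f hM N hrel
    classical
    rcases T.eq_empty_or_nonempty with rfl | ⟨β, hβ⟩
    · simp
    -- the shifted family
    set g : k → Polynomial k := fun α =>
      C α * (f α).comp (X + C 1) - C β * f α with hg
    have hgrel : ∀ n, N ≤ n → ∑ α ∈ T, (g α).eval (n : k) * α ^ n = 0 := by
      intro n hn
      have h1 := hrel n hn
      have h2 := hrel (n + 1) (by omega)
      have : ∑ α ∈ T, (g α).eval (n : k) * α ^ n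
          = ∑ α ∈ T, (f α).eval ((n + 1 : ℕ) : k) * α ^ (n + 1)
            - β * ∑ α ∈ T, (f α).eval (n : k) * α ^ n := by
        rw [Finset.mul_sum, ← Finset.sum_sub_distrib]
        apply Finset.sum_congr rfl
        intro α _
        simp only [hg, eval_sub, eval_mul, eval_C, eval_comp, eval_add, eval_X, eval_one]
        push_cast
        ring
      rw [this, h1, h2]
      ring
    have hdegg : ∀ α, (g α).natDegree ≤ (f α).natDegree := by
      intro α
      refine (Polynomial.natDegree_sub_le _ _).trans (max_le ?_ ?_)
      · exact (natDegree_C_mul_le _ _).trans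
          (by rw [natDegree_comp, natDegree_X_add_C, mul_one])
      · exact natDegree_C_mul_le _ _
    -- in both cases we first obtain `g α = 0` for `α ∈ T.erase β`
    have hkey : ∀ α ∈ T.erase β, g α = 0 := by
      by_cases hd : 1 ≤ (f β).natDegree
      · -- degree of `g β` strictly drops
        have hdlt : (g β).natDegree < (f β).natDegree := by
          have hcomp : ((f β).comp (X + C 1)).natDegree = (f β).natDegree := by
            rw [natDegree_comp, natDegree_X_add_C, mul_one]
          have hC1 : C (1:k) = ((1:k) • (1:Polynomial k)) := by simp
          have hco : (g β).coeff (f β).natDegree = 0 := by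
            have hlc : ((f β).comp (X + C 1)).coeff (f β).natDegree
                = (f β).leadingCoeff := by
              have h4 := Polynomial.leadingCoeff_comp (p := f β) (q := X + C 1)
                (by rw [natDegree_X_add_C]; omega)
              rwa [(Polynomial.monic_X_add_C (1 : k)).leadingCoeff, one_pow, mul_one,
                Polynomial.leadingCoeff, Polynomial.leadingCoeff, hcomp] at h4
            simp only [hg, coeff_sub, coeff_C_mul, hlc, Polynomial.leadingCoeff]
            ring
          rcases eq_or_ne (g β) 0 with h0 | h0
          · rw [h0, natDegree_zero]; omega
          · rcases lt_or_eq_of_le (hdegg β) with h | h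
            · exact h
            · exfalso
              apply Polynomial.leadingCoeff_ne_zero.mpr h0
              rw [Polynomial.leadingCoeff, h]
              exact hco
        intro α hα
        refine ih T hT g ?_ N hgrel α (Finset.mem_of_mem_erase hα)
        have e1 : (2 * (g β).natDegree + 1) + ∑ α ∈ T.erase β, (2 * (g α).natDegree + 1)
            = ∑ α ∈ T, (2 * (g α).natDegree + 1) := by
          exact Finset.add_sum_erase T (fun α => 2 * (g α).natDegree + 1) hβ
        have e2 : (2 * (f β).natDegree + 1) + ∑ α ∈ T.erase β, (2 * (f α).natDegree + 1)
            = ∑ α ∈ T, (2 * (f α).natDegree + 1) := by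
          exact Finset.add_sum_erase T (fun α => 2 * (f α).natDegree + 1) hβ
        have h2 : ∑ α ∈ T.erase β, (2 * (g α).natDegree + 1)
            ≤ ∑ α ∈ T.erase β, (2 * (f α).natDegree + 1) :=
          Finset.sum_le_sum (fun α _ => by have := hdegg α; omega)
        omega
      · -- `f β` is constant, so `g β = 0`; drop `β` from `T`
        obtain ⟨c, hc⟩ := Polynomial.natDegree_eq_zero.mp (by omega : (f β).natDegree = 0)
        have hgβ : g β = 0 := by simp [hg, ← hc]
        have hgrel' : ∀ n, N ≤ n → ∑ α ∈ T.erase β, (g α).eval (n : k) * α ^ n = 0 := by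
          intro n hn
          have := hgrel n hn
          rw [← Finset.add_sum_erase _ _ hβ, hgβ] at this
          simpa using this
        intro α hα
        refine ih (T.erase β) (fun a ha => hT a (Finset.mem_of_mem_erase ha)) g ?_ N hgrel' α hα
        have h2 : ∑ α ∈ T.erase β, (2 * (g α).natDegree + 1)
            ≤ ∑ α ∈ T.erase β, (2 * (f α).natDegree + 1) :=
          Finset.sum_le_sum (fun α _ => by have := hdegg α; omega)
        have h3 : (2 * (f β).natDegree + 1) + ∑ α ∈ T.erase β, (2 * (f α).natDegree + 1)
            = ∑ α ∈ T, (2 * (f α).natDegree + 1) := by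
          exact Finset.add_sum_erase T (fun α => 2 * (f α).natDegree + 1) hβ
        omega
    -- from `g α = 0` deduce `f α = 0` for `α ≠ β`
    have hfα : ∀ α ∈ T.erase β, f α = 0 := by
      intro α hα
      obtain ⟨hne, hαT⟩ := Finset.mem_erase.mp hα
      by_contra hf0
      have hcomp : ((f α).comp (X + C 1)).natDegree = (f α).natDegree := by
        rw [natDegree_comp, natDegree_X_add_C, mul_one]
      have hlc : ((f α).comp (X + C 1)).coeff (f α).natDegree = (f α).leadingCoeff := by
        have h4 := Polynomial.leadingCoeff_comp (p := f α) (q := X + C 1)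
          (by rw [natDegree_X_add_C]; omega)
        rwa [(Polynomial.monic_X_add_C (1 : k)).leadingCoeff, one_pow, mul_one,
          Polynomial.leadingCoeff, Polynomial.leadingCoeff, hcomp] at h4
      have := hkey α hα
      have hco : (g α).coeff (f α).natDegree = 0 := by rw [this]; simp
      simp only [hg, coeff_sub, coeff_C_mul, hlc, Polynomial.leadingCoeff] at hco
      have hlead : (f α).coeff (f α).natDegree ≠ 0 :=
        Polynomial.leadingCoeff_ne_zero.mpr hf0
      have : (α - β) * (f α).coeff (f α).natDegree = 0 := by linear_combination hco
      rcases mul_eq_zero.mp this with h | h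
      · exact hne (sub_eq_zero.mp h)
      · exact hlead h
    -- finally `f β = 0` from the original relation
    have hfβ : f β = 0 := by
      apply ELIaux.poly_eval_nat_zero _ N
      intro n hn
      have := hrel n hn
      have hz : ∑ α ∈ T.erase β, (f α).eval (n : k) * α ^ n = 0 :=
        Finset.sum_eq_zero (fun α hα => by rw [hfα α hα]; simp)
      rw [← Finset.add_sum_erase _ _ hβ, hz, add_zero] at this
      have hβ0 : β ^ n ≠ 0 := pow_ne_zero _ (hT β hβ)
      exact (mul_eq_zero.mp this).resolve_right hβ0
    intro α hα
    rcases eq_or_ne α β with rfl | hne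
    · exact hfβ
    · exact hfα α (Finset.mem_erase.mpr ⟨hne, hα⟩)


/-- The falling factorial polynomial `X (X-1) ⋯ (X-i+1)`. -/
noncomputable def ELIaux.dpoly (k : Type*) [Field k] (i : ℕ) : Polynomial k :=
  ∏ j ∈ range i, (X - C (j : k))

lemma ELIaux.dpoly_monic {k : Type*} [Field k] (i : ℕ) : (ELIaux.dpoly k i).Monic :=
  monic_prod_of_monic _ _ (fun j _ => monic_X_sub_C _)

lemma ELIaux.dpoly_natDegree {k : Type*} [Field k] (i : ℕ) : (ELIaux.dpoly k i).natDegree = i := by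
  rw [ELIaux.dpoly, natDegree_prod]
  · have : ∀ j ∈ range i, (X - C (j : k)).natDegree = 1 :=
      fun j _ => natDegree_X_sub_C (j : k)
    rw [Finset.sum_congr rfl this]
    simp
  · intro j _
    exact (monic_X_sub_C _).ne_zero


lemma ELIaux.dpoly_eval {k : Type*} [Field k] [CharZero k] {n i : ℕ} (h : i ≤ n) :
    (ELIaux.dpoly k i).eval (n : k) = (n.descFactorial i : k) := by
  rw [Nat.descFactorial_eq_prod_range, ELIaux.dpoly, eval_prod, Nat.cast_prod]
  apply Finset.prod_congr rfl
  intro j hj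
  rw [Finset.mem_range] at hj
  rw [Nat.cast_sub (by omega)]
  simp



lemma ELIaux.dpoly_indep {k : Type*} [Field k] [CharZero k] : ∀ (J : ℕ) (b : ℕ → k),
    (∑ i ∈ range J, C (b i) * ELIaux.dpoly k i = 0) → ∀ i < J, b i = 0 := by
  intro J
  induction J with
  | zero => intro b _ i hi; omega
  | succ J ih =>
    intro b hb i hi
    have hbJ : b J = 0 := by
      have := congrArg (fun p => Polynomial.coeff p J) hb
      simp only [Finset.sum_range_succ, coeff_add, coeff_zero] at this
      rw [Polynomial.finset_sum_coeff] at this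
      rw [Finset.sum_eq_zero (fun j hj => by
        rw [Finset.mem_range] at hj
        rw [coeff_C_mul, Polynomial.coeff_eq_zero_of_natDegree_lt
          (by rw [ELIaux.dpoly_natDegree]; omega), mul_zero])] at this
      have hc1 : (ELIaux.dpoly k J).coeff J = 1 := by
        have h5 := (ELIaux.dpoly_monic (k := k) J).coeff_natDegree
        rwa [ELIaux.dpoly_natDegree] at h5
      rw [coeff_C_mul, hc1, mul_one] at this
      simpa using this
    rcases eq_or_lt_of_le (Nat.lt_succ_iff.mp hi) with rfl | hi'
    · exact hbJ
    · apply ih b ?_ i hi'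
      rw [Finset.sum_range_succ, hbJ] at hb
      simpa using hb


lemma ELIaux.coeff_zero_of_big_component {σ k : Type*} [CommSemiring k] (P : MvPolynomial σ k)
    (M : σ →₀ ℕ) (z : σ) (h : P.totalDegree < M z) : MvPolynomial.coeff M P = 0 := by
  apply MvPolynomial.coeff_eq_zero_of_totalDegree_lt
  refine h.trans_le ?_
  apply Finset.single_le_sum (fun i _ => Nat.zero_le _)
  rw [Finsupp.mem_support_iff]
  omega

/-- The exponential `e^{α X_z}` in `k[[X_z : z ∈ σ]]`: its coefficient at `X_z^n` is
`αⁿ/n!` and its coefficient at any monomial involving another variable is `0`. -/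
noncomputable def expScaledVar {σ : Type*} (k : Type*) [Field k] (z : σ) (α : k) :
    MvPowerSeries σ k :=
  fun m => if m = Finsupp.single z (m z) then α ^ (m z) / (Nat.factorial (m z) : k) else 0

lemma ELIaux.coeff_expScaledVar {σ k : Type*} [Field k] (z : σ) (α : k) (m : σ →₀ ℕ) :
    MvPowerSeries.coeff m (expScaledVar k z α) =
      if m = Finsupp.single z (m z) then α ^ (m z) / (Nat.factorial (m z) : k) else 0 :=
  rfl

lemma ELIaux.coeff_mul_exp {σ k : Type*} [Field k] (φ : MvPowerSeries σ k) (z : σ) (α : k)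
    (mb : σ →₀ ℕ) (hmb : mb z = 0) (n : ℕ) :
    MvPowerSeries.coeff (mb + Finsupp.single z n) (φ * expScaledVar k z α) =
      ∑ j ∈ Finset.range (n + 1),
        MvPowerSeries.coeff (mb + Finsupp.single z (n - j)) φ
          * (α ^ j / (Nat.factorial j : k)) := by
  classical
  rw [MvPowerSeries.coeff_mul]
  set ι : ℕ → (σ →₀ ℕ) × (σ →₀ ℕ) :=
    fun j => (mb + Finsupp.single z (n - j), Finsupp.single z j) with hι
  have hadd : ∀ j, j ≤ n → (ι j).1 + (ι j).2 = mb + Finsupp.single z n := by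
    intro j hj
    simp only [hι]
    rw [add_assoc, ← Finsupp.single_add, Nat.sub_add_cancel hj]
  have hsub : Finset.image ι (Finset.range (n + 1))
      ⊆ Finset.HasAntidiagonal.antidiagonal (mb + Finsupp.single z n) := by
    intro x hx
    obtain ⟨j, hj, rfl⟩ := Finset.mem_image.mp hx
    rw [Finset.HasAntidiagonal.mem_antidiagonal]
    exact hadd j (by rw [Finset.mem_range] at hj; omega)
  have hvan : ∀ x ∈ Finset.HasAntidiagonal.antidiagonal (mb + Finsupp.single z n),
      x ∉ Finset.image ι (Finset.range (n + 1)) →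
      MvPowerSeries.coeff x.1 φ * MvPowerSeries.coeff x.2 (expScaledVar k z α) = 0 := by
    intro x hx hnx
    rw [Finset.HasAntidiagonal.mem_antidiagonal] at hx
    by_cases hE : x.2 = Finsupp.single z (x.2 z)
    · exfalso
      apply hnx
      have hjn : x.2 z ≤ n := by
        have h1 : x.2 z ≤ (x.1 + x.2) z := by simp
        rw [hx] at h1
        simpa [hmb] using h1
      apply Finset.mem_image.mpr
      refine ⟨x.2 z, Finset.mem_range.mpr (by omega), ?_⟩
      have h2 : (ι (x.2 z)).1 + (ι (x.2 z)).2 = x.1 + x.2 := by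
        rw [hadd _ hjn, hx]
      have h3 : (ι (x.2 z)).2 = x.2 := hE.symm
      have h4 : (ι (x.2 z)).1 = x.1 := by
        have := h2
        rw [h3] at this
        exact add_right_cancel this
      exact Prod.ext h4 h3
    · rw [ELIaux.coeff_expScaledVar, if_neg hE, mul_zero]
  rw [← Finset.sum_subset hsub hvan]
  rw [Finset.sum_image (by
    intro a _ b _ hab
    have : (ι a).2 = (ι b).2 := by rw [hab]
    have h6 : (Finsupp.single z a : σ →₀ ℕ) z = (Finsupp.single z b : σ →₀ ℕ) z := by
      simp only [hι] at this
      rw [this]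
    simpa [Finsupp.single_eq_same] using h6)]
  apply Finset.sum_congr rfl
  intro j _
  congr 1
  rw [ELIaux.coeff_expScaledVar]
  simp [hι, Finsupp.single_eq_same]


open ELIaux

/-- Let `σ` be any alphabet of commuting variables and `k` a field of
characteristic zero. In `k[[X_z : z ∈ σ]]`, the family `(e^{α X_z})` indexed by pairs
`(z, α) ∈ σ × (k ∖ {0})` is linearly independent over the polynomial subring
`k[X_z : z ∈ σ]`. -/
theorem exponentials_linearly_independent_over_polynomials
    (σ : Type*) (k : Type*) [Field k] [CharZero k] :
    ∀ (s : Finset (σ × k)) (P : σ × k → MvPolynomial σ k),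
      (∀ p ∈ s, p.2 ≠ 0) →
      (∑ p ∈ s, (↑(P p) : MvPowerSeries σ k) * expScaledVar k p.1 p.2 = 0) →
      ∀ p ∈ s, P p = 0 := by
  intro s P hα hrel p0 hp0
  apply MvPolynomial.ext
  intro m0
  rw [MvPolynomial.coeff_zero]
  set z0 : σ := p0.1 with hz0
  set α0 : k := p0.2 with hα0
  set mb : σ →₀ ℕ := m0.erase z0 with hmbdef
  have hmbz : mb z0 = 0 := Finsupp.erase_same
  set D : ℕ := m0 z0 + ∑ p ∈ s, (P p).totalDegree with hD
  have hDdeg : ∀ p ∈ s, (P p).totalDegree ≤ D := by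
    intro p hp
    have h1 : (P p).totalDegree ≤ ∑ p ∈ s, (P p).totalDegree := by
      exact Finset.single_le_sum (f := fun p => (P p).totalDegree) (fun i _ => Nat.zero_le _) hp
    omega
  set T : Finset k := (s.filter (fun p => p.1 = z0)).image Prod.snd with hT
  have hT0 : ∀ α ∈ T, α ≠ 0 := by
    intro α hαT
    obtain ⟨p, hp, rfl⟩ := Finset.mem_image.mp hαT
    exact hα p (Finset.mem_filter.mp hp).1
  set c : k → ℕ → k :=
    fun α i => MvPolynomial.coeff (mb + Finsupp.single z0 i) (P (z0, α)) with hc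
  set f : k → Polynomial k :=
    fun α => ∑ i ∈ range (D + 1), C (c α i * (α⁻¹) ^ i) * dpoly k i with hf
  -- Step A: the sequence relation
  have hcoeffrel : ∀ n, D + 1 ≤ n →
      ∑ α ∈ T, (∑ i ∈ range (D + 1),
        c α i * (α ^ (n - i) / ((n - i).factorial : k))) = 0 := by
    intro n hn
    have h0 := congrArg (MvPowerSeries.coeff (mb + Finsupp.single z0 n)) hrel
    rw [map_zero, map_sum] at h0
    rw [← Finset.sum_filter_add_sum_filter_not s (fun p => p.1 = z0)] at h0
    have hsecond : ∑ p ∈ s.filter (fun p => ¬ p.1 = z0),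
        MvPowerSeries.coeff (mb + Finsupp.single z0 n)
          ((↑(P p) : MvPowerSeries σ k) * expScaledVar k p.1 p.2) = 0 := by
      apply Finset.sum_eq_zero
      intro p hp
      have hz : p.1 ≠ z0 := by simpa using (Finset.mem_filter.mp hp).2
      set m : σ →₀ ℕ := mb + Finsupp.single z0 n with hm
      have hmz0 : m z0 = n := by simp [hm, hmbz]
      have hrw : m = m.erase p.1 + Finsupp.single p.1 (m p.1) :=
        (Finsupp.erase_add_single p.1 m).symm
      rw [hrw, coeff_mul_exp _ _ _ _ (Finsupp.erase_same) _]
      apply Finset.sum_eq_zero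
      intro j _
      have : MvPowerSeries.coeff (m.erase p.1 + Finsupp.single p.1 (m p.1 - j))
          (↑(P p) : MvPowerSeries σ k) = 0 := by
        rw [MvPolynomial.coeff_coe]
        apply coeff_zero_of_big_component _ _ z0
        have h2 : (m.erase p.1 + Finsupp.single p.1 (m p.1 - j)) z0 = n := by
          rw [Finsupp.add_apply, Finsupp.erase_ne (Ne.symm hz),
            Finsupp.single_eq_of_ne' hz, hmz0, add_zero]
        rw [h2]
        have := hDdeg p (Finset.mem_filter.mp hp).1
        omega
      rw [this, zero_mul]
    have hfirst : ∀ p ∈ s.filter (fun p => p.1 = z0),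
        MvPowerSeries.coeff (mb + Finsupp.single z0 n)
          ((↑(P p) : MvPowerSeries σ k) * expScaledVar k p.1 p.2)
        = ∑ i ∈ range (D + 1),
            c p.2 i * (p.2 ^ (n - i) / ((n - i).factorial : k)) := by
      intro p hp
      obtain ⟨hps, hz⟩ := Finset.mem_filter.mp hp
      rw [hz, coeff_mul_exp _ _ _ mb hmbz n, ← Finset.sum_range_reflect]
      have hsub : range (D + 1) ⊆ range (n + 1) := by
        apply Finset.range_subset_range.mpr; omega
      rw [← Finset.sum_subset hsub ?van]
      case van =>
        intro i hi hni
        rw [Finset.mem_range] at hi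
        rw [Finset.mem_range] at hni
        have hiD : D + 1 ≤ i := by omega
        have : MvPowerSeries.coeff (mb + Finsupp.single z0 (n - (n + 1 - 1 - i)))
            (↑(P p) : MvPowerSeries σ k) = 0 := by
          rw [MvPolynomial.coeff_coe]
          apply coeff_zero_of_big_component _ _ z0
          have h2 : (mb + Finsupp.single z0 (n - (n + 1 - 1 - i))) z0 = i := by
            rw [Finsupp.add_apply, hmbz, Finsupp.single_eq_same, zero_add]
            omega
          rw [h2]
          have := hDdeg p hps
          omega
        rw [this, zero_mul]
      apply Finset.sum_congr rfl
      intro i hi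
      rw [Finset.mem_range] at hi
      have h3 : n + 1 - 1 - i = n - i := by omega
      have h4 : n - (n - i) = i := by omega
      rw [h3, h4, MvPolynomial.coeff_coe]
      have hpe : (z0, p.2) = p := by
        rw [← hz]
      rw [hc]
      simp only []
      rw [hpe]
    rw [Finset.sum_congr rfl hfirst, hsecond, add_zero] at h0
    rw [hT, Finset.sum_image ?inj]
    case inj =>
      intro p hps q hqs hpq
      have hp1 : p.1 = z0 := (Finset.mem_filter.mp hps).2
      have hq1 : q.1 = z0 := (Finset.mem_filter.mp hqs).2
      exact Prod.ext (hp1.trans hq1.symm) hpq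
    exact h0
  -- Step B: convert to the polynomial-exponential form
  have hseq : ∀ n, D + 1 ≤ n → ∑ α ∈ T, (f α).eval (n : k) * α ^ n = 0 := by
    intro n hn
    have hrel2 := hcoeffrel n hn
    have : ∑ α ∈ T, (f α).eval (n : k) * α ^ n
        = (n.factorial : k) * ∑ α ∈ T, (∑ i ∈ range (D + 1),
            c α i * (α ^ (n - i) / ((n - i).factorial : k))) := by
      rw [Finset.mul_sum]
      apply Finset.sum_congr rfl
      intro α hαT
      have hα0' : α ≠ 0 := hT0 α hαT
      rw [hf]
      simp only []
      rw [Polynomial.eval_finset_sum, Finset.sum_mul, Finset.mul_sum]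
      apply Finset.sum_congr rfl
      intro i hi
      rw [Finset.mem_range] at hi
      have hin : i ≤ n := by omega
      rw [eval_mul, eval_C, dpoly_eval hin]
      have hfact : ((n - i).factorial : k) * (n.descFactorial i : k) = (n.factorial : k) := by
        exact_mod_cast congrArg (Nat.cast : ℕ → k) (Nat.factorial_mul_descFactorial hin)
      have hpow : α ^ (n - i) * α ^ i = α ^ n := by
        rw [← pow_add]
        congr 1
        omega
      have hfne : ((n - i).factorial : k) ≠ 0 := by
        exact_mod_cast Nat.cast_ne_zero.mpr (Nat.factorial_ne_zero _)
      field_simp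
      rw [← hfact, ← hpow]
      simp only [one_div, inv_pow]
      field_simp
    rw [this, hrel2, mul_zero]
  -- Step C: conclude
  have hfzero : ∀ α ∈ T, f α = 0 :=
    seq_lemma _ T hT0 f le_rfl (D + 1) hseq
  have hα0T : α0 ∈ T := by
    rw [hT]
    apply Finset.mem_image.mpr
    exact ⟨p0, Finset.mem_filter.mpr ⟨hp0, rfl⟩, rfl⟩
  have hcoeffs : ∀ i < D + 1, c α0 i * (α0⁻¹) ^ i = 0 :=
    dpoly_indep (D + 1) _ (hfzero α0 hα0T)
  have hiD : m0 z0 < D + 1 := by omega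
  have h6 := hcoeffs (m0 z0) hiD
  have hα0ne : α0 ≠ 0 := hα p0 hp0
  have h7 : c α0 (m0 z0) = 0 := by
    rcases mul_eq_zero.mp h6 with h | h
    · exact h
    · exact absurd h (pow_ne_zero _ (inv_ne_zero hα0ne))
  rw [hc] at h7
  simp only [] at h7
  rw [hmbdef, Finsupp.erase_add_single] at h7
  have hpe : (z0, α0) = p0 := rfl
  rw [hpe] at h7
  exact h7
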